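/- There exists k₀ ∈ ℕ such that for every k ≥ k₀ there exists a vertex 2-coloring g (a map from vertices to Bool) of the increasing de Bruijn graph D(k, M), where M = t_{k−2}(⌊k/√8⌋) (i.e., M is obtained from ⌊k/√8⌋ by applying the map x ↦ 2^x exactly (k−3) times), such that no directed path with k vertices is monochromatic: there are no distinct vertices a^{(1)}, …, a^{(k)} with a directed edge from a^{(j)} to a^{(j+1)} for each j and g(a^{(1)}) = … = g(a^{(k)}). -/

import Mathlib

/-- A vertex of the increasing `k`-dimensional de Bruijn graph of `m` symbols:
a strictly increasing sequence of length `k` with entries in `{1,…,m}`. -/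
def DeBruijnVertex (k m : ℕ) : Type := {a : Fin k → Fin m // StrictMono a}

/-- The edge relation of the increasing de Bruijn graph `D(k,m)`: there is a directed edge
from `a` to `b` iff `b i = a (i+1)` for all `i ∈ {1,…,k-1}`. -/
def deBruijnAdj {k m : ℕ} (a b : DeBruijnVertex k m) : Prop :=
  ∀ i : Fin (k - 1),
    b.1 ⟨i.1, by have := i.isLt; omega⟩ = a.1 ⟨i.1 + 1, by have := i.isLt; omega⟩

/-- One "stepping-down" operation: top differing bit together with a direction bit. -/
private def dd (a b : ℕ) : ℕ := 2 * Nat.log2 (a ^^^ b) + (if a < b then 1 else 0)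

/-- Apply `dd` to consecutive entries of a sequence. -/
private def dstep (s : ℕ → ℕ) : ℕ → ℕ := fun i => dd (s i) (s (i + 1))

private lemma testBit_log2_self {n : ℕ} (h : n ≠ 0) : n.testBit n.log2 = true := by
  have h1 : 2 ^ n.log2 ≤ n := Nat.log2_self_le h
  have h2 : n < 2 ^ (n.log2 + 1) := Nat.lt_log2_self
  rw [Nat.testBit_eq_decide_div_mod_eq]
  have hpos : 0 < 2 ^ n.log2 := Nat.pow_pos (by norm_num)
  have hdiv : n / 2 ^ n.log2 = 1 := by
    have lo : 1 ≤ n / 2 ^ n.log2 := (Nat.le_div_iff_mul_le hpos).2 (by omega)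
    have hi : n / 2 ^ n.log2 < 2 := Nat.div_lt_of_lt_mul (by rw [pow_succ] at h2; omega)
    omega
  simp [hdiv]

private lemma testBit_higher {a b j : ℕ} (hne : a ≠ b) (hj : Nat.log2 (a ^^^ b) < j) :
    a.testBit j = b.testBit j := by
  have hx : a ^^^ b ≠ 0 := fun h => hne (xor_eq_zero_iff.1 h)
  have hlt : a ^^^ b < 2 ^ j := (Nat.log2_lt hx).1 hj
  have hfb := Nat.testBit_lt_two_pow hlt
  rw [Nat.testBit_xor] at hfb
  cases hA : a.testBit j <;> cases hB : b.testBit j <;> simp_all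

private lemma testBit_log2_of_lt {a b : ℕ} (h : a < b) :
    a.testBit (Nat.log2 (a ^^^ b)) = false ∧ b.testBit (Nat.log2 (a ^^^ b)) = true := by
  have hne : a ≠ b := Nat.ne_of_lt h
  have hx : a ^^^ b ≠ 0 := fun hh => hne (xor_eq_zero_iff.1 hh)
  have htop : (a ^^^ b).testBit (Nat.log2 (a ^^^ b)) = true := testBit_log2_self hx
  rw [Nat.testBit_xor] at htop
  cases hA : a.testBit (Nat.log2 (a ^^^ b)) <;>
    cases hB : b.testBit (Nat.log2 (a ^^^ b))
  · rw [hA, hB] at htop; simp at htop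
  · exact ⟨rfl, rfl⟩
  · -- a has the bit, b doesn't: then b < a, contradiction
    exfalso
    have hba : b < a := by
      refine Nat.lt_of_testBit (Nat.log2 (a ^^^ b)) hB hA ?_
      intro j hj
      exact (testBit_higher hne hj).symm
    omega
  · rw [hA, hB] at htop; simp at htop

private lemma dd_ne {a b c : ℕ} (h1 : a ≠ b) (h2 : b ≠ c) : dd a b ≠ dd b c := by
  intro h
  unfold dd at h
  by_cases hab : a < b <;> by_cases hbc : b < c
  · simp only [if_pos hab, if_pos hbc] at h
    have ht : Nat.log2 (a ^^^ b) = Nat.log2 (b ^^^ c) := by omega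
    have e1 := (testBit_log2_of_lt hab).2
    have e2 := (testBit_log2_of_lt hbc).1
    rw [ht] at e1
    rw [e1] at e2
    exact Bool.noConfusion e2
  · simp only [if_pos hab, if_neg hbc] at h; omega
  · simp only [if_neg hab, if_pos hbc] at h; omega
  · have hba : b < a := by omega
    have hcb : c < b := by omega
    simp only [if_neg hab, if_neg hbc] at h
    have ht : Nat.log2 (a ^^^ b) = Nat.log2 (b ^^^ c) := by omega
    have e1 := (testBit_log2_of_lt hba).1
    have e2 := (testBit_log2_of_lt hcb).2
    rw [Nat.xor_comm b a] at e1
    rw [Nat.xor_comm c b] at e2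
    rw [ht] at e1
    rw [e1] at e2
    exact Bool.noConfusion e2

private lemma dd_lt {a b t : ℕ} (ha : a < 2 ^ t) (hb : b < 2 ^ t) (hne : a ≠ b) :
    dd a b < 2 * t := by
  have hx : a ^^^ b ≠ 0 := fun hh => hne (xor_eq_zero_iff.1 hh)
  have hxl : a ^^^ b < 2 ^ t := Nat.xor_lt_two_pow ha hb
  have hlog : Nat.log2 (a ^^^ b) < t := (Nat.log2_lt hx).2 hxl
  unfold dd
  split <;> omega

private lemma dstep_loc : ∀ (r : ℕ) (s s' : ℕ → ℕ) (i : ℕ),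
    (∀ t, t ≤ r → s (i + t) = s' (i + t)) → dstep^[r] s i = dstep^[r] s' i := by
  intro r
  induction r with
  | zero => intro s s' i h; simpa using h 0 (le_refl 0)
  | succ r ih =>
    intro s s' i h
    rw [Function.iterate_succ_apply, Function.iterate_succ_apply]
    apply ih
    intro t ht
    show dd (s (i + t)) (s (i + t + 1)) = dd (s' (i + t)) (s' (i + t + 1))
    rw [h t (by omega), show i + t + 1 = i + (t + 1) by omega, h (t + 1) (by omega)]

private lemma dstep_shift : ∀ (r : ℕ) (s : ℕ → ℕ) (j i : ℕ),
    dstep^[r] (fun t => s (j + t)) i = dstep^[r] s (j + i) := by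
  intro r
  induction r with
  | zero => intro s j i; rfl
  | succ r ih =>
    intro s j i
    rw [Function.iterate_succ_apply', Function.iterate_succ_apply']
    show dd (dstep^[r] (fun t => s (j + t)) i) (dstep^[r] (fun t => s (j + t)) (i + 1))
        = dd (dstep^[r] s (j + i)) (dstep^[r] s (j + i + 1))
    rw [ih, ih, show j + (i + 1) = j + i + 1 by omega]


/-- For all large enough `k` there is a vertex `2`-coloring of the increasing de Bruijn
graph `D(k,M)`, where `M = t_{k-2}(⌊k/√8⌋)` (the tower of height `k-3` over `⌊k/√8⌋`),
such that no directed path with `k` vertices is monochromatic. -/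
theorem deBruijn_two_coloring_no_monochromatic_path :
    ∃ k₀ : ℕ, ∀ k : ℕ, k₀ ≤ k →
      ∀ M : ℕ, M = (fun x => 2 ^ x)^[k - 3] ⌊(k : ℝ) / Real.sqrt 8⌋₊ →
        ∃ g : DeBruijnVertex k M → Bool,
          ¬∃ a : Fin k → DeBruijnVertex k M, Function.Injective a ∧
            (∀ i : Fin (k - 1),
              deBruijnAdj (a ⟨i.1, by have := i.isLt; omega⟩)
                (a ⟨i.1 + 1, by have := i.isLt; omega⟩)) ∧
            ∀ i j : Fin k, g (a i) = g (a j) := by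
  refine ⟨100, ?_⟩
  intro k hk M hM
  have hk0 : 0 < k := by omega
  set m₀ : ℕ := ⌊(k : ℝ) / Real.sqrt 8⌋₊ with hm₀def
  -- numeric facts about m₀
  have hsqrt_pos : (0 : ℝ) < Real.sqrt 8 := Real.sqrt_pos.2 (by norm_num)
  have hs8lo : (2.8 : ℝ) < Real.sqrt 8 := (Real.lt_sqrt (by norm_num)).2 (by norm_num)
  have hs8hi : Real.sqrt 8 < 3 := (Real.sqrt_lt' (by norm_num)).2 (by norm_num)
  have hkR : (100 : ℝ) ≤ (k : ℝ) := by exact_mod_cast hk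
  have hm₀k : 14 * m₀ ≤ 5 * k := by
    have h1 : (m₀ : ℝ) ≤ (k : ℝ) / Real.sqrt 8 := Nat.floor_le (by positivity)
    have h2 : (k : ℝ) / Real.sqrt 8 ≤ (k : ℝ) / 2.8 :=
      div_le_div_of_nonneg_left (by positivity) (by norm_num) hs8lo.le
    have h3 : (m₀ : ℝ) ≤ (k : ℝ) / 2.8 := h1.trans h2
    rw [le_div_iff₀ (by norm_num : (0:ℝ) < 2.8)] at h3
    have h4 : ((14 * m₀ : ℕ) : ℝ) ≤ ((5 * k : ℕ) : ℝ) := by push_cast; nlinarith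
    exact_mod_cast h4
  have hm₀1 : 1 ≤ m₀ := by
    apply Nat.le_floor
    rw [le_div_iff₀ hsqrt_pos]
    push_cast
    nlinarith
  have hkm : 2 * m₀ + 5 ≤ k := by omega
  -- the tower
  set W : ℕ → ℕ := fun j => (fun x => 2 ^ x)^[j] m₀ with hWdef
  have hWsucc : ∀ j, W (j + 1) = 2 ^ (W j) := by
    intro j
    simp only [hWdef]
    rw [Function.iterate_succ_apply']
  have hW1 : ∀ j, 1 ≤ W j := by
    intro j
    cases j with
    | zero => exact hm₀1
    | succ j => rw [hWsucc]; exact Nat.one_le_two_pow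
  have hMW : M = W (k - 3) := hM
  have hMpos : 0 < M := by rw [hMW]; exact hW1 _
  -- the coloring
  refine ⟨fun v => decide (dstep^[k - 3]
      (fun i => if h : i < k then (v.1 ⟨i, h⟩ : ℕ) else 0) 0 < dstep^[k - 3]
      (fun i => if h : i < k then (v.1 ⟨i, h⟩ : ℕ) else 0) 1), ?_⟩
  rintro ⟨a, -, hadj, hmono⟩
  -- the underlying increasing sequence of the path
  set X : ℕ → ℕ := fun i =>
    if h : i < k then ((a ⟨0, hk0⟩).1 ⟨i, h⟩ : ℕ)
    else if h2 : i - (k - 1) < k then ((a ⟨i - (k - 1), h2⟩).1 ⟨k - 1, by omega⟩ : ℕ)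
    else 0 with hXdef
  have compat : ∀ j (hj : j < k) t (ht : t < k), X (j + t) = ((a ⟨j, hj⟩).1 ⟨t, ht⟩ : ℕ) := by
    intro j
    induction j with
    | zero =>
      intro hj t ht
      simp only [hXdef, Nat.zero_add, dif_pos ht]
    | succ j ih =>
      intro hj t ht
      rcases Nat.lt_or_ge t (k - 1) with htk | htk
      · have e0 : X (j + 1 + t) = X (j + (t + 1)) := by congr 1; omega
        rw [e0, ih (by omega) (t + 1) (by omega)]
        have hedge := hadj ⟨j, by omega⟩ ⟨t, htk⟩
        exact (congrArg Fin.val hedge).symm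
      · have hte : t = k - 1 := by omega
        subst hte
        have h1 : ¬ (j + 1 + (k - 1) < k) := by omega
        have h2 : j + 1 + (k - 1) - (k - 1) = j + 1 := by omega
        have h2' : j + 1 + (k - 1) - (k - 1) < k := by omega
        simp only [hXdef, dif_neg h1, dif_pos h2']
        have hfe : (⟨j + 1 + (k - 1) - (k - 1), h2'⟩ : Fin k) = ⟨j + 1, hj⟩ := Fin.ext h2
        rw [hfe]
  have xmono : ∀ i, i + 1 ≤ 2 * k - 2 → X i < X (i + 1) := by
    intro i hi
    rcases Nat.lt_or_ge (i + 1) k with h | h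
    · have e1 := compat 0 hk0 i (by omega)
      have e2 := compat 0 hk0 (i + 1) h
      rw [Nat.zero_add] at e1 e2
      rw [e1, e2]
      exact Fin.lt_def.1 ((a ⟨0, hk0⟩).2 (Fin.mk_lt_mk.2 (by omega)))
    · set j : ℕ := i + 1 - (k - 1) with hjdef
      have hj : j < k := by omega
      have e1 := compat j hj (k - 2) (by omega)
      have e2 := compat j hj (k - 1) (by omega)
      rw [show j + (k - 2) = i by omega] at e1
      rw [show j + (k - 1) = i + 1 by omega] at e2
      rw [e1, e2]
      exact Fin.lt_def.1 ((a ⟨j, hj⟩).2 (Fin.mk_lt_mk.2 (by omega)))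
  have xlt : ∀ i, X i < M := by
    intro i
    simp only [hXdef]
    split
    · exact Fin.is_lt _
    · split
      · exact Fin.is_lt _
      · exact hMpos
  -- distinctness propagates through the levels
  have dist : ∀ r, r ≤ k - 3 → ∀ i, i + r + 1 ≤ 2 * k - 2 →
      dstep^[r] X i ≠ dstep^[r] X (i + 1) := by
    intro r
    induction r with
    | zero =>
      intro _ i hi
      simpa using Nat.ne_of_lt (xmono i (by omega))
    | succ r ih =>
      intro hr i hi
      rw [Function.iterate_succ_apply']
      show dd (dstep^[r] X i) (dstep^[r] X (i + 1))
          ≠ dd (dstep^[r] X (i + 1)) (dstep^[r] X (i + 1 + 1))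
      exact dd_ne (ih (by omega) i (by omega)) (ih (by omega) (i + 1) (by omega))
  -- the tower collapses
  have bnd : ∀ r, r ≤ k - 4 → ∀ i, i + r ≤ 2 * k - 2 →
      dstep^[r] X i < 2 ^ (W (k - 4 - r) + 2) := by
    intro r
    induction r with
    | zero =>
      intro _ i _
      simp only [Function.iterate_zero, id_eq, Nat.sub_zero]
      calc X i < M := xlt i
        _ = 2 ^ (W (k - 4)) := by rw [hMW, show k - 3 = (k - 4) + 1 by omega, hWsucc]
        _ ≤ 2 ^ (W (k - 4) + 2) := Nat.pow_le_pow_right (by norm_num) (by omega)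
    | succ r ih =>
      intro hr i hi
      rw [Function.iterate_succ_apply']
      show dd (dstep^[r] X i) (dstep^[r] X (i + 1)) < _
      have hb1 := ih (by omega) i (by omega)
      have hb2 := ih (by omega) (i + 1) (by omega)
      have hne := dist r (by omega) i (by omega)
      have hlt := dd_lt hb1 hb2 hne
      have hj : k - 4 - r = (k - 4 - (r + 1)) + 1 := by omega
      have hWe : W (k - 4 - r) = 2 ^ (W (k - 4 - (r + 1))) := by rw [hj, hWsucc]
      have h2le : 2 ≤ 2 ^ (W (k - 4 - (r + 1))) :=
        le_trans (by norm_num) (Nat.pow_le_pow_right (by norm_num) (hW1 _))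
      calc dd (dstep^[r] X i) (dstep^[r] X (i + 1)) < 2 * (W (k - 4 - r) + 2) := hlt
        _ = 2 * 2 ^ (W (k - 4 - (r + 1))) + 4 := by rw [hWe]; ring
        _ ≤ 2 ^ (W (k - 4 - (r + 1)) + 2) := by rw [pow_add]; omega
  have zb : ∀ i, i + (k - 3) ≤ 2 * k - 2 → dstep^[k - 3] X i < 2 * m₀ + 4 := by
    intro i hi
    rw [show k - 3 = (k - 4) + 1 by omega, Function.iterate_succ_apply']
    show dd (dstep^[k - 4] X i) (dstep^[k - 4] X (i + 1)) < _
    have hb1 := bnd (k - 4) (le_refl _) i (by omega)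
    have hb2 := bnd (k - 4) (le_refl _) (i + 1) (by omega)
    have hne := dist (k - 4) (by omega) i (by omega)
    have hlt := dd_lt hb1 hb2 hne
    have hW0 : W (k - 4 - (k - 4)) = m₀ := by rw [Nat.sub_self]; rfl
    rw [hW0] at hlt
    omega
  -- each vertex color is a comparison of consecutive values of the iterated sequence
  have gcomp : ∀ j (hj : j < k),
      (decide (dstep^[k - 3]
        (fun i => if h : i < k then ((a ⟨j, hj⟩).1 ⟨i, h⟩ : ℕ) else 0) 0 < dstep^[k - 3]
        (fun i => if h : i < k then ((a ⟨j, hj⟩).1 ⟨i, h⟩ : ℕ) else 0) 1) : Bool)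
      = decide (dstep^[k - 3] X j < dstep^[k - 3] X (j + 1)) := by
    intro j hj
    have hgen : ∀ i₀, i₀ + (k - 3) < k →
        dstep^[k - 3] (fun i => if h : i < k then ((a ⟨j, hj⟩).1 ⟨i, h⟩ : ℕ) else 0) i₀
        = dstep^[k - 3] X (j + i₀) := by
      intro i₀ hi₀
      rw [← dstep_shift (k - 3) X j i₀]
      apply dstep_loc
      intro t ht
      have htk : i₀ + t < k := by omega
      simp only [dif_pos htk]
      exact (compat j hj (i₀ + t) htk).symm
    rw [hgen 0 (by omega), hgen 1 (by omega), Nat.add_zero]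
  -- conclude
  have hcol : ∀ j, j + 1 ≤ k →
      decide (dstep^[k - 3] X j < dstep^[k - 3] X (j + 1))
      = decide (dstep^[k - 3] X 0 < dstep^[k - 3] X 1) := by
    intro j hj
    rw [← gcomp j (by omega), ← gcomp 0 hk0]
    have := hmono ⟨j, by omega⟩ ⟨0, hk0⟩
    simpa using this
  cases hgb : (decide (dstep^[k - 3] X 0 < dstep^[k - 3] X 1) : Bool) with
  | true =>
    have hup : ∀ j, j + 1 ≤ k → dstep^[k - 3] X j < dstep^[k - 3] X (j + 1) := by
      intro j hj
      have := (hcol j hj).trans hgb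
      exact of_decide_eq_true this
    have hgrow : ∀ j, j ≤ k → dstep^[k - 3] X 0 + j ≤ dstep^[k - 3] X j := by
      intro j
      induction j with
      | zero => intro _; omega
      | succ j ih =>
        intro h
        have h1 := hup j (by omega)
        have h2 := ih (by omega)
        omega
    have h1 := hgrow k (le_refl k)
    have h2 := zb k (by omega)
    omega
  | false =>
    have hdn : ∀ j, j + 1 ≤ k → dstep^[k - 3] X (j + 1) < dstep^[k - 3] X j := by
      intro j hj
      have hne := dist (k - 3) (le_refl _) j (by omega)
      have hnlt : ¬ (dstep^[k - 3] X j < dstep^[k - 3] X (j + 1)) :=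
        of_decide_eq_false ((hcol j hj).trans hgb)
      omega
    have hgrow : ∀ j, j ≤ k → dstep^[k - 3] X j + j ≤ dstep^[k - 3] X 0 := by
      intro j
      induction j with
      | zero => intro _; omega
      | succ j ih =>
        intro h
        have h1 := hdn j (by omega)
        have h2 := ih (by omega)
        omega
    have h1 := hgrow k (le_refl k)
    have h2 := zb 0 (by omega)
    omega
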